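/- Let P(X) = (X−i)·(X−j)·(X−k) and Q(X) = 2X·(X−i)·(X−j) in ℍ[X] (products with right coefficients). Then |P(x)| ≤ |Q(x)| for every quaternion x with |x| = 1. -/

import Mathlib

noncomputable def qi : Quaternion ℝ := ⟨0, 1, 0, 0⟩
noncomputable def qj : Quaternion ℝ := ⟨0, 0, 1, 0⟩
noncomputable def qk : Quaternion ℝ := ⟨0, 0, 0, 1⟩
theorem qi_parts : qi.re = 0 ∧ qi.imI = 1 ∧ qi.imJ = 0 ∧ qi.imK = 0 := ⟨rfl, rfl, rfl, rfl⟩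
theorem qj_parts : qj.re = 0 ∧ qj.imI = 0 ∧ qj.imJ = 1 ∧ qj.imK = 0 := ⟨rfl, rfl, rfl, rfl⟩
theorem qk_parts : qk.re = 0 ∧ qk.imI = 0 ∧ qk.imJ = 0 ∧ qk.imK = 1 := ⟨rfl, rfl, rfl, rfl⟩
theorem two_parts : (2 : Quaternion ℝ).re = 2 ∧ (2 : Quaternion ℝ).imI = 0 ∧ (2 : Quaternion ℝ).imJ = 0 ∧ (2 : Quaternion ℝ).imK = 0 := ⟨rfl, rfl, rfl, rfl⟩

/-- For `P(X) = (X−i)·(X−j)·(X−k) = X³ − X²(i+j+k) + X(i−j+k) + 1` and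
`Q(X) = 2X·(X−i)·(X−j) = 2X³ − 2X²(i+j) + 2Xk`, one has `|P(x)| ≤ |Q(x)|`
for every quaternion `x` with `|x| = 1`. -/
theorem counterexample_modulus_comparison :
    ∀ x : Quaternion ℝ, ‖x‖ = 1 →
      ‖x ^ 3 - x ^ 2 * (qi + qj + qk) + x * (qi - qj + qk) + 1‖ ≤
      ‖x ^ 3 * 2 - x ^ 2 * (2 * (qi + qj)) + x * (2 * qk)‖ := by
  intro x hx
  have h2 : (2 : Quaternion ℝ) = ⟨2, 0, 0, 0⟩ := rfl
  set r : Quaternion ℝ := x ^ 2 - x * (qi + qj) + qk with hr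
  have hP : x ^ 3 - x ^ 2 * (qi + qj + qk) + x * (qi - qj + qk) + 1 = x * r - r * qk := by
    rw [hr]
    apply Quaternion.ext <;>
      simp [qi_parts, qj_parts, qk_parts, two_parts, pow_succ, Quaternion.re_mul, Quaternion.imI_mul,
        Quaternion.imJ_mul, Quaternion.imK_mul, Quaternion.re_one, Quaternion.imI_one, Quaternion.imJ_one, Quaternion.imK_one] <;> ring
  have hQ : x ^ 3 * 2 - x ^ 2 * (2 * (qi + qj)) + x * (2 * qk) = 2 * (x * r) := by
    rw [hr]
    apply Quaternion.ext <;>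
      simp [qi_parts, qj_parts, qk_parts, two_parts, pow_succ, Quaternion.re_mul, Quaternion.imI_mul,
        Quaternion.imJ_mul, Quaternion.imK_mul, Quaternion.re_one, Quaternion.imI_one, Quaternion.imJ_one, Quaternion.imK_one] <;> ring
  have hk : ‖qk‖ = 1 := by
    have h1 : ‖qk‖ * ‖qk‖ = 1 := by
      rw [← Quaternion.normSq_eq_norm_mul_self]
      simp [qk_parts, Quaternion.normSq_def']
    nlinarith [norm_nonneg qk]
  rw [hP, hQ]
  calc ‖x * r - r * qk‖ ≤ ‖x * r‖ + ‖r * qk‖ := norm_sub_le _ _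
    _ = ‖r‖ + ‖r‖ := by rw [norm_mul, norm_mul, hx, hk, one_mul, mul_one]
    _ = ‖(2 : Quaternion ℝ)‖ * ‖x * r‖ := by
        have h2n : ‖(2 : Quaternion ℝ)‖ = 2 := by
          have : (2 : Quaternion ℝ) = ((2 : ℝ) : Quaternion ℝ) := rfl
          rw [this, Quaternion.norm_coe]
          norm_num
        rw [norm_mul, hx, one_mul, h2n]
        ring
    _ = ‖2 * (x * r)‖ := (norm_mul _ _).symm
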